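/- Let f : 𝕂ⁿ → 𝕂ᵖ be a polynomial map attaining c as a Lipschitz trivial value, and suppose the accumulation set at infinity of f⁻¹(c) is empty (equivalently f⁻¹(c) is compact). Then f is proper at c: there exists a compact neighbourhood 𝒱 of c such that f⁻¹(𝒱) is compact. -/

import Mathlib

/-- The projectivization of a topological vector space carries the quotient topology. -/
noncomputable instance projectivizationTopology (𝕂 : Type*) [DivisionRing 𝕂] (V : Type*)
    [AddCommGroup V] [Module 𝕂 V] [TopologicalSpace V] :
    TopologicalSpace (Projectivization 𝕂 V) := by
  unfold Projectivization; infer_instance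

/-- The embedding of Kn into the projectivization of Kn x K, sending x to [x : 1]. -/
noncomputable def toProj {𝕂 : Type*} [RCLike 𝕂] {n : ℕ} (x : EuclideanSpace 𝕂 (Fin n)) :
    Projectivization 𝕂 (EuclideanSpace 𝕂 (Fin n) × 𝕂) :=
  Projectivization.mk 𝕂 (x, (1 : 𝕂)) (fun h => one_ne_zero (congrArg Prod.snd h))

/-- The point at infinity [v : 0] determined by a nonzero vector v of Kn. -/
noncomputable def atInfty {𝕂 : Type*} [RCLike 𝕂] {n : ℕ} (v : EuclideanSpace 𝕂 (Fin n))
    (hv : v ≠ 0) : Projectivization 𝕂 (EuclideanSpace 𝕂 (Fin n) × 𝕂) :=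
  Projectivization.mk 𝕂 (v, (0 : 𝕂)) (fun h => hv (congrArg Prod.fst h))

/-- The accumulation set at infinity of a subset X of Kn: the intersection of the closure
of X in projective space KPn with the hyperplane at infinity. -/
noncomputable def accInf {𝕂 : Type*} [RCLike 𝕂] {n : ℕ} (X : Set (EuclideanSpace 𝕂 (Fin n))) :
    Set (Projectivization 𝕂 (EuclideanSpace 𝕂 (Fin n) × 𝕂)) :=
  closure (toProj '' X) ∩
    {P | ∃ (v : EuclideanSpace 𝕂 (Fin n)) (hv : v ≠ 0), P = atInfty v hv}

/-- `c` is a Lipschitz trivial value of `f`: there is a neighbourhood `V` of `c` and a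
bi-Lipschitz homeomorphism `H : f⁻¹(c) × V ≃ f⁻¹(V)` (outer metrics, product metric)
with `f ∘ H = projection onto V`. -/
def LipTrivAt {E F : Type*} [MetricSpace E] [MetricSpace F] (f : E → F) (c : F) : Prop :=
  ∃ V : Set F, IsOpen V ∧ c ∈ V ∧
    ∃ (H : ↥(f ⁻¹' {c}) × ↥V ≃ ↥(f ⁻¹' V)) (K K' : NNReal),
      LipschitzWith K H ∧ LipschitzWith K' H.symm ∧
      ∀ z : ↥(f ⁻¹' {c}) × ↥V, f (H z : E) = (z.2 : F)

/-- f : Kn → Kp is a polynomial mapping: each component is given by a polynomial in n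
variables over 𝕂. -/
def IsPolynomialMap {𝕂 : Type*} [RCLike 𝕂] {n p : ℕ}
    (f : EuclideanSpace 𝕂 (Fin n) → EuclideanSpace 𝕂 (Fin p)) : Prop :=
  ∃ P : Fin p → MvPolynomial (Fin n) 𝕂,
    ∀ (x : EuclideanSpace 𝕂 (Fin n)) (i : Fin p),
      f x i = MvPolynomial.eval (fun j => x j) (P i)


open Metric Filter Bornology

lemma proj_mk'_continuous {𝕂 : Type*} [DivisionRing 𝕂] {V : Type*}
    [AddCommGroup V] [Module 𝕂 V] [TopologicalSpace V] :
    Continuous (Projectivization.mk' 𝕂 : {v : V // v ≠ 0} → Projectivization 𝕂 V) :=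
  continuous_quotient_mk'

lemma accInf_empty_isBounded {𝕂 : Type*} [RCLike 𝕂] {n : ℕ}
    {X : Set (EuclideanSpace 𝕂 (Fin n))} (h : accInf X = ∅) :
    Bornology.IsBounded X := by
  by_contra hb
  have hx : ∀ k : ℕ, ∃ x, x ∈ X ∧ (k : ℝ) + 1 ≤ ‖x‖ := by
    intro k
    by_contra hk
    push_neg at hk
    exact hb ((Metric.isBounded_iff_subset_closedBall 0).2 ⟨(k : ℝ) + 1, fun x hx => by
      simpa [Metric.mem_closedBall] using (hk x hx).le⟩)
  choose x hxX hxn using hx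
  have hxpos : ∀ k, (0 : ℝ) < ‖x k‖ := fun k =>
    lt_of_lt_of_le (by positivity) (hxn k)
  set u : ℕ → EuclideanSpace 𝕂 (Fin n) := fun k => ((‖x k‖ : 𝕂))⁻¹ • x k with hu
  have hnormu : ∀ k, ‖u k‖ = 1 := by
    intro k
    rw [hu]
    simp only [norm_smul, norm_inv, RCLike.norm_ofReal, abs_of_pos (hxpos k)]
    exact inv_mul_cancel₀ (hxpos k).ne'
  have humem : ∀ k, u k ∈ Metric.sphere (0 : EuclideanSpace 𝕂 (Fin n)) 1 := fun k => by
    simp [mem_sphere_zero_iff_norm, hnormu k]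
  obtain ⟨v, hvmem, φ, hφ, hconv⟩ :=
    (isCompact_sphere (0 : EuclideanSpace 𝕂 (Fin n)) 1).tendsto_subseq humem
  have hvnorm : ‖v‖ = 1 := mem_sphere_zero_iff_norm.1 hvmem
  have hvne : v ≠ 0 := fun h0 => by simp [h0] at hvnorm
  set t : ℕ → 𝕂 := fun k => ((‖x (φ k)‖ : 𝕂))⁻¹ with ht
  have htconv : Tendsto t atTop (nhds 0) := by
    rw [tendsto_zero_iff_norm_tendsto_zero]
    have hle : ∀ k : ℕ, ‖t k‖ ≤ 1 / ((k : ℝ) + 1) := by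
      intro k
      rw [ht]
      simp only [norm_inv, RCLike.norm_ofReal, abs_of_pos (hxpos (φ k)), one_div]
      refine inv_anti₀ (by positivity) ?_
      refine le_trans ?_ (hxn (φ k))
      have h2 : (k : ℝ) ≤ φ k := Nat.cast_le.2 (hφ.id_le k)
      linarith
    refine squeeze_zero (fun k => norm_nonneg _) hle ?_
    exact tendsto_one_div_add_atTop_nhds_zero_nat
  have hwne : ∀ k, ((u (φ k), t k) : EuclideanSpace 𝕂 (Fin n) × 𝕂) ≠ 0 := by
    intro k h0
    have h1 : u (φ k) = 0 := congrArg Prod.fst h0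
    have h2 := hnormu (φ k)
    rw [h1] at h2
    simp at h2
  have hvne' : ((v, (0 : 𝕂)) : EuclideanSpace 𝕂 (Fin n) × 𝕂) ≠ 0 :=
    fun h0 => hvne (congrArg Prod.fst h0)
  have hwconv' : Tendsto (fun k => (⟨(u (φ k), t k), hwne k⟩ :
      {w : EuclideanSpace 𝕂 (Fin n) × 𝕂 // w ≠ 0})) atTop
      (nhds ⟨(v, 0), hvne'⟩) := by
    rw [tendsto_subtype_rng]
    exact hconv.prodMk_nhds htconv
  have hPconv : Tendsto (fun k => Projectivization.mk 𝕂 ((u (φ k), t k) :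
      EuclideanSpace 𝕂 (Fin n) × 𝕂) (hwne k)) atTop (nhds (atInfty v hvne)) :=
    (proj_mk'_continuous.tendsto _).comp hwconv'
  have hmk : ∀ k, Projectivization.mk 𝕂 ((u (φ k), t k) : EuclideanSpace 𝕂 (Fin n) × 𝕂)
      (hwne k) = toProj (x (φ k)) := by
    intro k
    rw [toProj, Projectivization.mk_eq_mk_iff']
    refine ⟨((‖x (φ k)‖ : 𝕂))⁻¹, ?_⟩
    have hne : ((‖x (φ k)‖ : 𝕂)) ≠ 0 := by
      simpa using (hxpos (φ k)).ne'
    apply Prod.ext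
    · simp [hu, Prod.smul_def]
    · simp [ht, Prod.smul_def, inv_mul_cancel₀]
  have hmem : atInfty v hvne ∈ accInf X := by
    constructor
    · refine mem_closure_of_tendsto (by simpa [hmk] using hPconv) ?_
      exact Eventually.of_forall fun k => Set.mem_image_of_mem _ (hxX (φ k))
    · exact ⟨v, hvne, rfl⟩
  rw [h] at hmem
  exact hmem

lemma isPolynomialMap_continuous {𝕂 : Type*} [RCLike 𝕂] {n p : ℕ}
    {f : EuclideanSpace 𝕂 (Fin n) → EuclideanSpace 𝕂 (Fin p)}
    (hf : IsPolynomialMap f) : Continuous f := by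
  obtain ⟨P, hP⟩ := hf
  have h1 : Continuous fun (x : EuclideanSpace 𝕂 (Fin n)) =>
      (fun i => MvPolynomial.eval (fun j => x j) (P i) : Fin p → 𝕂) := by
    refine continuous_pi fun i => ?_
    exact (MvPolynomial.continuous_eval (P i)).comp
      (continuous_pi fun j => (continuous_apply j).comp (PiLp.continuous_ofLp 2 _))
  have h2 : f = (WithLp.equiv 2 (∀ _ : Fin p, 𝕂)).symm ∘
      fun x => (fun i => MvPolynomial.eval (fun j => x j) (P i)) := by
    funext x
    exact WithLp.ofLp_injective 2 (funext fun i => hP x i)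
  rw [h2]
  exact (PiLp.continuous_toLp 2 _).comp h1

/-- a polynomial map attaining a Lipschitz trivial value c whose fibre has
empty accumulation set at infinity is proper at c. -/
theorem stmt_10 {𝕂 : Type*} [RCLike 𝕂] {n p : ℕ}
    (f : EuclideanSpace 𝕂 (Fin n) → EuclideanSpace 𝕂 (Fin p))
    (hf : IsPolynomialMap f)
    (c : EuclideanSpace 𝕂 (Fin p))
    (hltv : LipTrivAt f c)
    (hacc : accInf (f ⁻¹' {c}) = ∅) :
    ∃ V : Set (EuclideanSpace 𝕂 (Fin p)),
      V ∈ nhds c ∧ IsCompact V ∧ IsCompact (f ⁻¹' V) := by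
  obtain ⟨V, hVopen, hcV, H, K, K', hK, hK', hproj⟩ := hltv
  have hcont : Continuous f := isPolynomialMap_continuous hf
  have hfib : Bornology.IsBounded (f ⁻¹' {c}) := accInf_empty_isBounded hacc
  obtain ⟨r, hr, hball⟩ := Metric.nhds_basis_closedBall.mem_iff.1 (hVopen.mem_nhds hcV)
  refine ⟨Metric.closedBall c r, Metric.closedBall_mem_nhds c hr,
    isCompact_closedBall c r, ?_⟩
  have hclosed : IsClosed (f ⁻¹' Metric.closedBall c r) :=
    Metric.isClosed_closedBall.preimage hcont
  refine Metric.isCompact_of_isClosed_isBounded hclosed ?_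
  by_cases hne : (f ⁻¹' {c}).Nonempty
  · obtain ⟨x₀, hx₀⟩ := hne
    obtain ⟨R, hR⟩ := (Metric.isBounded_iff_subset_closedBall x₀).1 hfib
    set z₀ : ↥(f ⁻¹' {c}) × ↥V := (⟨x₀, hx₀⟩, ⟨c, hcV⟩) with hz₀
    rw [Metric.isBounded_iff_subset_closedBall ((H z₀ : EuclideanSpace 𝕂 (Fin n)))]
    refine ⟨K * max R r, fun y hy => ?_⟩
    have hyV : y ∈ f ⁻¹' V := hball hy
    set z := H.symm ⟨y, hyV⟩ with hz
    have hHz : H z = ⟨y, hyV⟩ := H.apply_symm_apply _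
    have hdist : dist y ((H z₀ : EuclideanSpace 𝕂 (Fin n))) ≤ K * dist z z₀ := by
      have := hK.dist_le_mul z z₀
      rw [hHz] at this
      simpa [Subtype.dist_eq] using this
    have hd1 : dist z.1 z₀.1 ≤ R := by
      rw [Subtype.dist_eq]
      exact hR z.1.2
    have hd2 : dist z.2 z₀.2 ≤ r := by
      rw [Subtype.dist_eq]
      have hfz : f ((H z : EuclideanSpace 𝕂 (Fin n))) = (z.2 : EuclideanSpace 𝕂 (Fin p)) :=
        hproj z
      rw [hHz] at hfz
      simp only [hz₀]
      rw [← hfz]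
      exact hy
    have hdzz : dist z z₀ ≤ max R r := by
      rw [Prod.dist_eq]
      exact max_le_max hd1 hd2
    rw [Metric.mem_closedBall]
    calc dist y ((H z₀ : EuclideanSpace 𝕂 (Fin n))) ≤ K * dist z z₀ := hdist
      _ ≤ K * max R r := by
          exact mul_le_mul_of_nonneg_left hdzz K.coe_nonneg
  · have hVempty : f ⁻¹' V = ∅ := by
      rw [Set.eq_empty_iff_forall_notMem]
      intro y hy
      exact hne ⟨((H.symm ⟨y, hy⟩).1 : EuclideanSpace 𝕂 (Fin n)), (H.symm ⟨y, hy⟩).1.2⟩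
    have hsub : f ⁻¹' Metric.closedBall c r ⊆ f ⁻¹' V := fun y hy => hball hy
    rw [hVempty, Set.subset_empty_iff] at hsub
    rw [hsub]
    exact Bornology.isBounded_empty
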